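/- For all integers Δ ≥ 1 and m ≥ 1, the generalized Heller constant satisfies h(Δ,m) ≤ h(1,m) + (Δ−1)·h_s^Δ(m), where h_s^Δ(m) is the refined shifted Heller constant. In particular, h(Δ,m) ≤ h(1,m) + (Δ−1)·h_s(m). -/

import Mathlib

open Matrix

/-- Every `k×k` minor of `A` is at most `c` in absolute value. -/
def MinorsLE {m n : ℕ} (k : ℕ) (A : Matrix (Fin m) (Fin n) ℝ) (c : ℝ) : Prop :=
  ∀ (f : Fin k ↪ Fin m) (g : Fin k ↪ Fin n), |(A.submatrix f g).det| ≤ c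

/-- `A` is totally 1-submodular: all its minors, of any size, are at most `1`
in absolute value. -/
def Totally1Submodular {m n : ℕ} (A : Matrix (Fin m) (Fin n) ℝ) : Prop :=
  ∀ k : ℕ, MinorsLE k A 1

/-- The shifted matrix `t + A`, whose columns are `t + A_j`. -/
def shiftMat {m n : ℕ} (t : Fin m → ℝ) (A : Matrix (Fin m) (Fin n) ℝ) :
    Matrix (Fin m) (Fin n) ℝ :=
  Matrix.of fun i j => t i + A i j

/-- All entries of `A` lie in `{-1, 0, 1}`. -/
def SignEntries {m n : ℕ} (A : Matrix (Fin m) (Fin n) ℝ) : Prop :=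
  ∀ i j, A i j = -1 ∨ A i j = 0 ∨ A i j = 1

/-- The data admissible for the shifted Heller constant `h_s(m)`: a translation vector
`t ∈ [0,1)^m \ {0}` and a matrix `A ∈ {-1,0,1}^{m×n}` with pairwise distinct columns
such that `t + A` is totally 1-submodular. -/
def ShiftedAdmissible (m n : ℕ) (t : Fin m → ℝ) (A : Matrix (Fin m) (Fin n) ℝ) : Prop :=
  (∀ i, 0 ≤ t i ∧ t i < 1) ∧ t ≠ 0 ∧ SignEntries A ∧
    Function.Injective A.transpose ∧ Totally1Submodular (shiftMat t A)

/-- `Δ_m(A) = Δ`: every `m×m` minor of the integer matrix `A` (with `m` rows) is at most `Δ`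
in absolute value, and some `m×m` minor attains `Δ` in absolute value. -/
def DeltaEq {m n : ℕ} (A : Matrix (Fin m) (Fin n) ℤ) (Δ : ℤ) : Prop :=
  (∀ (f : Fin m ↪ Fin m) (g : Fin m ↪ Fin n), |(A.submatrix f g).det| ≤ Δ) ∧
  (∃ (f : Fin m ↪ Fin m) (g : Fin m ↪ Fin n), |(A.submatrix f g).det| = Δ)

/-- The generalized Heller constant `h(Δ, m)`. -/
noncomputable def hGen (Δ : ℕ) (m : ℕ) : ℕ :=
  sSup {n : ℕ | ∃ A : Matrix (Fin m) (Fin n) ℤ,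
    Function.Injective A.transpose ∧ DeltaEq A (Δ : ℤ)}

/-- The shifted Heller constant `h_s(m)`. -/
noncomputable def hShifted (m : ℕ) : ℕ :=
  sSup {n : ℕ | ∃ (t : Fin m → ℝ) (A : Matrix (Fin m) (Fin n) ℝ), ShiftedAdmissible m n t A}

/-- The refined shifted Heller constant `h_s^Δ(m)`, where the translation vector is
additionally required to lie in `(1/Δ)ℤ^m`. -/
noncomputable def hShiftedRefined (Δ : ℕ) (m : ℕ) : ℕ :=
  sSup {n : ℕ | ∃ (t : Fin m → ℝ) (A : Matrix (Fin m) (Fin n) ℝ),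
    ShiftedAdmissible m n t A ∧ ∀ i, ∃ z : ℤ, (Δ : ℝ) * t i = (z : ℝ)}


open Matrix

section DetMachinery

variable {m n k : ℕ}

/-- det of a column-selection with an arbitrary (not nec. injective) column map. -/
lemma abs_det_cols_le (A : Matrix (Fin m) (Fin n) ℝ) (D : ℝ) (hD : 0 ≤ D)
    (hb : ∀ g : Fin m ↪ Fin n, |(A.submatrix (Function.Embedding.refl _) g).det| ≤ D)
    (g : Fin m → Fin n) : |(A.submatrix id g).det| ≤ D := by
  by_cases hg : Function.Injective g
  · exact hb ⟨g, hg⟩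
  · rw [Function.not_injective_iff] at hg
    obtain ⟨a, b, hab, hne⟩ := hg
    rw [Matrix.det_zero_of_column_eq hne (fun i => by simp [Matrix.submatrix_apply, hab])]
    simpa using hD

/-- If all columns outside the range of `f'` are the corresponding standard basis
vectors, the determinant is the minor on `range f' × range f'`. -/
lemma det_of_unit_cols (M : Matrix (Fin m) (Fin m) ℝ) (f' : Fin k ↪ Fin m)
    (h : ∀ c, (¬ ∃ a, f' a = c) → ∀ i, M i c = if i = c then 1 else 0) :
    M.det = (M.submatrix f' f').det := by
  classical
  have hdet := Matrix.twoBlockTriangular_det' M (fun c => ∃ a, f' a = c)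
    (fun i hi j hj => by
      rw [h j hj i]
      have : i ≠ j := by rintro rfl; exact hj hi
      simp [this])
  rw [hdet]
  have h2 : (Matrix.toSquareBlockProp M fun i => ¬ ∃ a, f' a = i) = 1 := by
    ext ⟨i, hi⟩ ⟨j, hj⟩
    rw [Matrix.toSquareBlockProp]
    by_cases hij : i = j
    · subst hij
      simp [h i hi, Matrix.one_apply]
    · have : (⟨i, hi⟩ : {c // ¬ ∃ a, f' a = c}) ≠ ⟨j, hj⟩ := by simpa using hij
      simp [h j hj i, hij, Matrix.one_apply, this]
  rw [h2, Matrix.det_one, mul_one]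
  -- identify the block with the submatrix
  let e : Fin k ≃ {c // ∃ a, f' a = c} :=
    { toFun := fun a => ⟨f' a, ⟨a, rfl⟩⟩
      invFun := fun c => c.2.choose
      left_inv := fun a => f'.injective (⟨a, rfl⟩ : ∃ b, f' b = f' a).choose_spec
      right_inv := fun c => Subtype.ext c.2.choose_spec }
  have : (Matrix.toSquareBlockProp M fun c => ∃ a, f' a = c).submatrix e e
      = M.submatrix f' f' := by
    ext a b
    have h1 : ((e a : {c // ∃ a, f' a = c}) : Fin m) = f' a := rfl
    have h2' : ((e b : {c // ∃ a, f' a = c}) : Fin m) = f' b := rfl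
    simp only [Matrix.toSquareBlockProp, Matrix.submatrix_apply, Matrix.toBlock_apply, h1, h2']
  rw [← this, Matrix.det_submatrix_equiv_self]

/-- The key minors bound: minors (of all sizes) of `B⁻¹ * A`, where `B` is the
column-submatrix of `A` along `g`, are bounded by `D / |det B|`. -/
lemma key_minor_bound (A : Matrix (Fin m) (Fin n) ℝ) (D : ℝ) (hD : 0 ≤ D)
    (hb : ∀ g : Fin m ↪ Fin n, |(A.submatrix (Function.Embedding.refl _) g).det| ≤ D)
    (g : Fin m → Fin n) (hu : IsUnit (A.submatrix id g).det)
    (f' : Fin k ↪ Fin m) (g' : Fin k → Fin n) :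
    |(((A.submatrix id g)⁻¹ * A).submatrix f' g').det| * |(A.submatrix id g).det| ≤ D := by
  classical
  set B := A.submatrix id g with hB
  set gN : Fin m → Fin n := fun c => if h : ∃ a, f' a = c then g' h.choose else g c with hgN
  have hN : |(A.submatrix id gN).det| ≤ D := abs_det_cols_le A D hD hb gN
  set N := A.submatrix id gN with hNdef
  set M := B⁻¹ * N with hM
  have hdetM : M.det = B⁻¹.det * N.det := Matrix.det_mul _ _
  have hMcols : ∀ c, (¬ ∃ a, f' a = c) → ∀ i, M i c = if i = c then 1 else 0 := by
    intro c hc i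
    have hcol : ∀ i', N i' c = B i' c := by
      intro i'
      simp only [hNdef, hB, Matrix.submatrix_apply, hgN, dif_neg hc, id]
    have : M i c = (B⁻¹ * B) i c := by
      simp only [hM, Matrix.mul_apply, hcol]
    rw [this, Matrix.nonsing_inv_mul _ hu, Matrix.one_apply]
  have hMblock : M.det = (M.submatrix f' f').det := det_of_unit_cols M f' hMcols
  have hgNval : ∀ b : Fin k, gN (f' b) = g' b := by
    intro b
    have hex : ∃ a, f' a = f' b := ⟨b, rfl⟩
    simp only [hgN, dif_pos hex]
    congr 1
    exact f'.injective hex.choose_spec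
  have hMsub : M.submatrix f' f' = ((B⁻¹ * A).submatrix f' g') := by
    ext a b
    simp only [Matrix.submatrix_apply, hM, Matrix.mul_apply, hNdef, hgNval b]
    rfl
  calc |((B⁻¹ * A).submatrix f' g').det| * |B.det|
      = |M.det| * |B.det| := by rw [hMblock, hMsub]
    _ = |B⁻¹.det * N.det| * |B.det| := by rw [hdetM]
    _ = |N.det| * (|B⁻¹.det| * |B.det|) := by rw [abs_mul]; ring
    _ = |N.det| := by
        rw [Matrix.det_nonsing_inv, ← abs_mul, Ring.inverse_mul_cancel _ hu, abs_one, mul_one]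
    _ ≤ D := hN

end DetMachinery

open Matrix Submodule

lemma natCard_quotient_range_mulVecLin {m : ℕ} (B : Matrix (Fin m) (Fin m) ℤ)
    (hB : B.det ≠ 0) :
    Nat.card ((Fin m → ℤ) ⧸ LinearMap.range B.mulVecLin) = B.det.natAbs := by
  classical
  set N := LinearMap.range B.mulVecLin with hN
  have hinj : Function.Injective B.mulVecLin := by
    intro x y hxy
    have h1 : B *ᵥ x = B *ᵥ y := hxy
    have h2 : B.adjugate *ᵥ (B *ᵥ x) = B.adjugate *ᵥ (B *ᵥ y) := by rw [h1]
    rw [Matrix.mulVec_mulVec, Matrix.mulVec_mulVec, Matrix.adjugate_mul,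
      Matrix.smul_mulVec, Matrix.smul_mulVec, Matrix.one_mulVec,
      Matrix.one_mulVec] at h2
    funext i
    have h3 := congrFun h2 i
    simp only [Pi.smul_apply, smul_eq_mul] at h3
    exact mul_left_cancel₀ hB h3
  let u1 : (Fin m → ℤ) ≃ₗ[ℤ] N := LinearEquiv.ofInjective B.mulVecLin hinj
  obtain ⟨nn, bM, bN, f, a, hsnf⟩ := N.smithNormalForm (Pi.basisFun ℤ (Fin m))
  have hnm : nn = m := by
    have h1 : Module.finrank ℤ N = nn := by
      rw [Module.finrank_eq_card_basis bN, Fintype.card_fin]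
    have h2 : Module.finrank ℤ N = m := by
      rw [← u1.finrank_eq, Module.finrank_pi, Fintype.card_fin]
    omega
  have hbij : Function.Bijective f :=
    (Fintype.bijective_iff_injective_and_card f).mpr
      ⟨f.injective, by rw [Fintype.card_fin, Fintype.card_fin, hnm]⟩
  let e : Fin nn ≃ Fin m := Equiv.ofBijective f hbij
  have he : ∀ j, e j = f j := fun _ => rfl
  have hfe : ∀ i, f (e.symm i) = i := fun i => e.apply_symm_apply i
  have hai : ∀ j, a j ≠ 0 := by
    intro j h0
    apply bN.ne_zero j
    have h1 := hsnf j
    rw [h0, zero_smul] at h1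
    exact Subtype.ext h1
  -- determinant computation
  let v : (Fin m → ℤ) ≃ₗ[ℤ] N := bM.equiv bN e.symm
  let S : (Fin m → ℤ) →ₗ[ℤ] (Fin m → ℤ) := N.subtype ∘ₗ v.toLinearMap
  have hSmat : LinearMap.toMatrix bM bM S = Matrix.diagonal (fun i => a (e.symm i)) := by
    ext i' i
    rw [LinearMap.toMatrix_apply]
    have h1 : S (bM i) = a (e.symm i) • bM i := by
      show (v (bM i) : Fin m → ℤ) = _
      rw [Module.Basis.equiv_apply, hsnf, hfe]
    rw [h1, _root_.map_smul]
    simp only [Module.Basis.repr_self, Finsupp.smul_single, smul_eq_mul, mul_one,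
      Finsupp.single_apply, Matrix.diagonal_apply]
    by_cases hii : i = i'
    · subst hii; simp
    · simp [hii, Ne.symm hii]
  have hSdet : LinearMap.det S = ∏ i, a (e.symm i) := by
    rw [← LinearMap.det_toMatrix bM, hSmat, Matrix.det_diagonal]
  let w : (Fin m → ℤ) ≃ₗ[ℤ] (Fin m → ℤ) := u1.trans v.symm
  have hcomp : S ∘ₗ w.toLinearMap = B.mulVecLin := by
    apply LinearMap.ext
    intro x
    show (v (v.symm (u1 x)) : Fin m → ℤ) = B.mulVecLin x
    rw [LinearEquiv.apply_symm_apply]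
    exact LinearEquiv.ofInjective_apply _ _
  have hdetB : B.det = (∏ i, a (e.symm i)) * LinearMap.det w.toLinearMap := by
    rw [← hSdet, ← LinearMap.det_comp, hcomp, ← Matrix.toLin'_apply', LinearMap.det_toLin']
  have hwunit : LinearMap.det w.toLinearMap = 1 ∨ LinearMap.det w.toLinearMap = -1 :=
    Int.isUnit_iff.mp w.isUnit_det'
  have hdetnat : B.det.natAbs = ∏ j, (a j).natAbs := by
    have h2 : B.det.natAbs = (∏ i, a (e.symm i)).natAbs := by
      rcases hwunit with h | h <;> rw [hdetB, Int.natAbs_mul, h] <;> simp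
    rw [h2]
    exact (map_prod Int.natAbsHom (fun i => a (e.symm i)) Finset.univ).trans
      (Equiv.prod_comp e.symm fun j => (a j).natAbs)
  -- quotient cardinality
  let φ : (Fin m → ℤ) ≃ₗ[ℤ] (Fin m → ℤ) := bM.equivFun
  let p : Fin m → Submodule ℤ ℤ := fun i => Ideal.span ({a (e.symm i)} : Set ℤ)
  let I' : Submodule ℤ (Fin m → ℤ) := Submodule.pi Set.univ p
  have hNspan : N = span ℤ (Set.range (fun j => (bN j : Fin m → ℤ))) := by
    conv_lhs => rw [← Submodule.map_subtype_top N, ← bN.span_eq, Submodule.map_span]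
    congr 1
    ext x
    simp [Set.range_comp]
  have hgen : ∀ j, φ ((bN j : Fin m → ℤ)) =
      a j • (fun i => if f j = i then (1:ℤ) else 0) := by
    intro j
    rw [hsnf j, _root_.map_smul]
    congr 1
    funext i
    exact bM.equivFun_self (f j) i
  have hmap : N.map (φ : (Fin m → ℤ) →ₗ[ℤ] (Fin m → ℤ)) = I' := by
    rw [hNspan, Submodule.map_span]
    apply le_antisymm
    · rw [span_le]
      rintro _ ⟨_, ⟨j, rfl⟩, rfl⟩
      simp only [LinearEquiv.coe_coe, SetLike.mem_coe]
      rw [hgen j, Submodule.mem_pi]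
      intro i _
      simp only [p, Pi.smul_apply, smul_eq_mul]
      by_cases hji : f j = i
      · have hji' : e.symm i = j := by rw [← hji]; exact e.symm_apply_apply j
        rw [if_pos hji, mul_one, hji']
        exact Ideal.mem_span_singleton_self _
      · rw [if_neg hji, mul_zero]
        exact zero_mem _
    · intro z hz
      have hz' : ∀ i, z i ∈ Ideal.span ({a (e.symm i)} : Set ℤ) := fun i =>
        (Submodule.mem_pi.mp hz) i (Set.mem_univ i)
      have hc : ∀ i, ∃ c : ℤ, z i = c * a (e.symm i) := by
        intro i
        obtain ⟨c, hc⟩ := Ideal.mem_span_singleton'.mp (hz' i)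
        exact ⟨c, hc.symm⟩
      choose c hc using hc
      have hzeq : z = ∑ i : Fin m,
          (c i * a (e.symm i)) • (fun j => if i = j then (1:ℤ) else 0) := by
        rw [pi_eq_sum_univ z]
        congr 1
        funext i
        rw [← hc i]
      rw [hzeq]
      apply sum_mem
      intro i _
      have h5 : φ ((bN (e.symm i) : Fin m → ℤ)) =
          a (e.symm i) • (fun j => if i = j then (1:ℤ) else 0) := by
        rw [hgen (e.symm i), hfe]
      have h6 : (c i * a (e.symm i)) • (fun j => if i = j then (1:ℤ) else 0)
          = c i • φ ((bN (e.symm i) : Fin m → ℤ)) := by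
        rw [h5, smul_smul]
      rw [h6]
      exact Submodule.smul_mem _ _ (Submodule.subset_span ⟨_, ⟨e.symm i, rfl⟩, rfl⟩)
  have hfin1 : Nat.card ((Fin m → ℤ) ⧸ N) = Nat.card ((Fin m → ℤ) ⧸ I') :=
    Nat.card_congr (Submodule.Quotient.equiv N I' φ hmap).toEquiv
  have hfin2 : Nat.card ((Fin m → ℤ) ⧸ I') = ∏ i : Fin m, Nat.card (ℤ ⧸ p i) := by
    rw [Nat.card_congr (Submodule.quotientPi p).toEquiv, Nat.card_pi]
  have hfin3 : ∀ i, Nat.card (ℤ ⧸ p i) = (a (e.symm i)).natAbs := by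
    intro i
    rw [Nat.card_congr (Int.quotientSpanEquivZMod (a (e.symm i))).toEquiv, Nat.card_zmod]
  rw [hfin1, hfin2]
  simp_rw [hfin3]
  rw [hdetnat]
  exact Equiv.prod_comp e.symm (fun j => (a j).natAbs)

open Matrix

section Helpers

lemma card_le_three_pow_real {m n : ℕ} (A : Matrix (Fin m) (Fin n) ℝ)
    (hsign : SignEntries A) (hinj : Function.Injective A.transpose) : n ≤ 3 ^ m := by
  classical
  have hinj2 : Function.Injective (fun j : Fin n => fun i : Fin m =>
      (if A i j = -1 then (0 : Fin 3) else if A i j = 0 then 1 else 2)) := by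
    intro j1 j2 h
    apply hinj
    funext i
    show A i j1 = A i j2
    have hi := congrFun h i
    rcases hsign i j1 with h1 | h1 | h1 <;> rcases hsign i j2 with h2 | h2 | h2 <;>
      rw [h1, h2] <;> exfalso <;> norm_num [h1, h2] at hi <;>
      all_goals exact absurd hi (by decide)
  calc n = Fintype.card (Fin n) := (Fintype.card_fin n).symm
    _ ≤ Fintype.card (Fin m → Fin 3) := Fintype.card_le_of_injective _ hinj2
    _ = 3 ^ m := by simp [Fintype.card_fun]

lemma card_le_three_pow_int {m n : ℕ} (A : Matrix (Fin m) (Fin n) ℤ)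
    (hsign : ∀ i j, |A i j| ≤ 1) (hinj : Function.Injective A.transpose) : n ≤ 3 ^ m := by
  apply card_le_three_pow_real (A.map (Int.cast : ℤ → ℝ))
  · intro i j
    have h4 := abs_le.mp (hsign i j)
    have h3 : A i j = -1 ∨ A i j = 0 ∨ A i j = 1 := by omega
    rcases h3 with h | h | h <;> simp [Matrix.map_apply, h]
  · intro j1 j2 h
    apply hinj
    funext i
    have := congrFun h i
    simpa [Matrix.transpose_apply, Matrix.map_apply] using this

lemma abs_det_col_submatrix {m n : ℕ} (A : Matrix (Fin m) (Fin n) ℤ) {d : ℤ}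
    (f : Fin m ↪ Fin m) (g : Fin m ↪ Fin n) (h : |(A.submatrix f g).det| = d) :
    |(A.submatrix id (⇑g)).det| = d := by
  have hbij : Function.Bijective f :=
    (Fintype.bijective_iff_injective_and_card f).mpr ⟨f.injective, rfl⟩
  let σ : Equiv.Perm (Fin m) := Equiv.ofBijective f hbij
  have heq : A.submatrix ⇑f ⇑g = (A.submatrix id ⇑g).submatrix ⇑σ id := rfl
  rw [heq, Matrix.det_permute] at h
  rcases Int.units_eq_one_or (Equiv.Perm.sign σ) with hs | hs <;>
    rw [hs] at h <;> simpa using h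

end Helpers

variable {m n : ℕ}

/-- cast matrix abbreviation facts -/
lemma cast_submatrix (A : Matrix (Fin m) (Fin n) ℤ) {k l : ℕ} (f : Fin k → Fin m)
    (g : Fin l → Fin n) :
    (A.map (Int.cast : ℤ → ℝ)).submatrix f g = (A.submatrix f g).map (Int.cast : ℤ → ℝ) := rfl

lemma cast_det {k : ℕ} (M : Matrix (Fin k) (Fin k) ℤ) :
    ((M.map (Int.cast : ℤ → ℝ)).det) = ((M.det : ℤ) : ℝ) :=
  (RingHom.map_det (Int.castRingHom ℝ) M).symm

lemma cast_abs_det {k : ℕ} (M : Matrix (Fin k) (Fin k) ℤ) :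
    |(M.map (Int.cast : ℤ → ℝ)).det| = ((|M.det| : ℤ) : ℝ) := by
  rw [cast_det]; push_cast; rfl

lemma cast_map_mul {a b c : ℕ} (M : Matrix (Fin a) (Fin b) ℤ) (N : Matrix (Fin b) (Fin c) ℤ) :
    (M * N).map (Int.cast : ℤ → ℝ) = M.map (Int.cast : ℤ → ℝ) * N.map (Int.cast : ℤ → ℝ) :=
  Matrix.map_mul (f := Int.castRingHom ℝ)

lemma cast_map_one {a : ℕ} : ((1 : Matrix (Fin a) (Fin a) ℤ).map (Int.cast : ℤ → ℝ)) = 1 :=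
  Matrix.map_one _ Int.cast_zero Int.cast_one

lemma col_inj_of_inv_mul {m n : ℕ} {R : Type*} [CommRing R] (B : Matrix (Fin m) (Fin m) R)
    (A : Matrix (Fin m) (Fin n) R) (hu : IsUnit B.det)
    (hinj : Function.Injective A.transpose) : Function.Injective (B⁻¹ * A).transpose := by
  intro j1 j2 h
  apply hinj
  funext i
  show A i j1 = A i j2
  have hAeq : A = B * (B⁻¹ * A) := (Matrix.mul_nonsing_inv_cancel_left B A hu).symm
  have h1 : ∀ j, A i j = ∑ kk, B i kk * (B⁻¹ * A) kk j := by
    intro j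
    conv_lhs => rw [hAeq]
    rw [Matrix.mul_apply]
  rw [h1 j1, h1 j2]
  refine Finset.sum_congr rfl fun kk _ => ?_
  have h2 := congrFun h kk
  rw [Matrix.transpose_apply, Matrix.transpose_apply] at h2
  rw [h2]

lemma key_bound_int {m n : ℕ} (A : Matrix (Fin m) (Fin n) ℤ) (Δ : ℕ) (hΔ : 1 ≤ Δ)
    (hb : ∀ (f : Fin m ↪ Fin m) (g : Fin m ↪ Fin n), |(A.submatrix f g).det| ≤ (Δ:ℤ))
    (g : Fin m → Fin n)
    (hdet : |(A.submatrix id g).det| = (Δ:ℤ))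
    {k : ℕ} (f' : Fin k ↪ Fin m) (g' : Fin k → Fin n) :
    |((((A.map (Int.cast : ℤ → ℝ)).submatrix id g)⁻¹ *
        (A.map (Int.cast : ℤ → ℝ))).submatrix f' g').det| ≤ 1 := by
  have hbR : ∀ gg : Fin m ↪ Fin n,
      |((A.map (Int.cast : ℤ → ℝ)).submatrix (⇑(Function.Embedding.refl (Fin m))) ⇑gg).det|
        ≤ (Δ:ℝ) := by
    intro gg
    rw [cast_submatrix, cast_abs_det]
    exact_mod_cast hb (Function.Embedding.refl _) gg
  have hdetR : |((A.map (Int.cast : ℤ → ℝ)).submatrix id g).det| = (Δ:ℝ) := by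
    rw [cast_submatrix, cast_abs_det]
    exact_mod_cast hdet
  have hΔpos : (0:ℝ) < (Δ:ℝ) := by exact_mod_cast hΔ
  have hu : IsUnit ((A.map (Int.cast : ℤ → ℝ)).submatrix id g).det := by
    apply isUnit_iff_ne_zero.mpr
    intro h0
    rw [h0, abs_zero] at hdetR
    exact hΔpos.ne hdetR
  have hkey := key_minor_bound (A.map (Int.cast : ℤ → ℝ)) (Δ:ℝ) hΔpos.le hbR g hu f' g'
  rw [hdetR] at hkey
  have h1 : |((((A.map (Int.cast : ℤ → ℝ)).submatrix id g)⁻¹ *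
      (A.map (Int.cast : ℤ → ℝ))).submatrix f' g').det| * (Δ:ℝ) ≤ 1 * (Δ:ℝ) := by
    rwa [one_mul]
  exact le_of_mul_le_mul_right h1 hΔpos

lemma hGenOne_mem_le (m n : ℕ) (A : Matrix (Fin m) (Fin n) ℤ)
    (hinj : Function.Injective A.transpose) (hA : DeltaEq A (1 : ℤ)) : n ≤ 3 ^ m := by
  classical
  obtain ⟨hb, f0, g0, hfg⟩ := hA
  have hB1 : |(A.submatrix id ⇑g0).det| = 1 := abs_det_col_submatrix A f0 g0 hfg
  set B := A.submatrix id ⇑g0 with hBdef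
  have huZ : IsUnit B.det := by
    rcases (abs_eq (by norm_num : (0:ℤ) ≤ 1)).mp hB1 with h | h
    · rw [h]; exact isUnit_one
    · rw [h]; exact isUnit_one.neg
  have hmapinv : (B⁻¹).map (Int.cast : ℤ → ℝ) =
      ((A.map (Int.cast : ℤ → ℝ)).submatrix id ⇑g0)⁻¹ := by
    refine (Matrix.inv_eq_left_inv ?_).symm
    rw [cast_submatrix, ← hBdef, ← cast_map_mul, Matrix.nonsing_inv_mul _ huZ, cast_map_one]
  have hCmap : (B⁻¹ * A).map (Int.cast : ℤ → ℝ) =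
      ((A.map (Int.cast : ℤ → ℝ)).submatrix id ⇑g0)⁻¹ * (A.map (Int.cast : ℤ → ℝ)) := by
    rw [cast_map_mul, hmapinv]
  apply card_le_three_pow_int (B⁻¹ * A)
  · intro i j
    have hkey := key_bound_int A 1 le_rfl hb ⇑g0 (by exact_mod_cast hB1)
      (f' := ⟨fun _ : Fin 1 => i, fun a b _ => Subsingleton.elim a b⟩) (g' := fun _ => j)
    have h2 : |(((B⁻¹ * A).map (Int.cast : ℤ → ℝ)) i j)| ≤ 1 := by
      simp [Matrix.det_fin_one, ← hCmap] at hkey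
      exact hkey
    rw [Matrix.map_apply] at h2
    exact_mod_cast h2
  · exact col_inj_of_inv_mul B A huZ hinj

lemma hShifted_mem_le (m n : ℕ) (t : Fin m → ℝ) (A : Matrix (Fin m) (Fin n) ℝ)
    (h : ShiftedAdmissible m n t A) : n ≤ 3 ^ m :=
  card_le_three_pow_real A h.2.2.1 h.2.2.2.1

theorem stmt6 (Δ m : ℕ) (hΔ : 1 ≤ Δ) (hm : 1 ≤ m)
    (n : ℕ) (A : Matrix (Fin m) (Fin n) ℤ)
    (hcols : Function.Injective A.transpose) (hA : DeltaEq A (Δ : ℤ)) :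
    n ≤ hGen 1 m + (Δ - 1) * hShiftedRefined Δ m ∧
    n ≤ hGen 1 m + (Δ - 1) * hShifted m := by
  classical
  obtain ⟨hb, f0, g0, hfg⟩ := hA
  have hBabs : |(A.submatrix id ⇑g0).det| = (Δ:ℤ) := abs_det_col_submatrix A f0 g0 hfg
  set B := A.submatrix id ⇑g0 with hBdef
  have hBne : B.det ≠ 0 := by
    intro h0
    rw [h0, abs_zero] at hBabs
    have : Δ = 0 := by exact_mod_cast hBabs.symm
    omega
  have hBnatAbs : B.det.natAbs = Δ := by
    have h1 := hBabs
    rw [Int.abs_eq_natAbs] at h1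
    exact_mod_cast h1
  set Abar := A.map (Int.cast : ℤ → ℝ) with hAbar
  set Bbar := Abar.submatrix id ⇑g0 with hBbar
  have hBbarB : Bbar = B.map (Int.cast : ℤ → ℝ) := by
    rw [hBbar, hAbar, cast_submatrix, hBdef]
  have hBbarDet : |Bbar.det| = (Δ:ℝ) := by
    rw [hBbarB, cast_abs_det, hBabs]
    push_cast
    rfl
  have hΔR : (0:ℝ) < (Δ:ℝ) := by exact_mod_cast hΔ
  have huR : IsUnit Bbar.det := by
    apply isUnit_iff_ne_zero.mpr
    intro h0
    rw [h0, abs_zero] at hBbarDet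
    exact hΔR.ne hBbarDet
  set C := Bbar⁻¹ * Abar with hC
  have hK : ∀ {k : ℕ} (f' : Fin k ↪ Fin m) (g' : Fin k → Fin n),
      |(C.submatrix ⇑f' g').det| ≤ 1 := by
    intro k f' g'
    exact key_bound_int A Δ hΔ hb ⇑g0 hBabs f' g'
  have hent : ∀ i j, |C i j| ≤ 1 := by
    intro i j
    have h1 := hK ⟨fun _ : Fin 1 => i, fun a b _ => Subsingleton.elim a b⟩ (fun _ => j)
    rwa [Matrix.det_fin_one, Matrix.submatrix_apply] at h1
  have hBC : Bbar * C = Abar := Matrix.mul_nonsing_inv_cancel_left Bbar Abar huR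
  have hAbarInj : Function.Injective Abar.transpose := by
    intro j1 j2 h
    apply hcols
    funext i
    have h1 := congrFun h i
    rw [Matrix.transpose_apply, Matrix.transpose_apply, hAbar, Matrix.map_apply,
      Matrix.map_apply] at h1
    exact_mod_cast h1
  have hCtInj : Function.Injective C.transpose := col_inj_of_inv_mul Bbar Abar huR hAbarInj
  have hsubmul : ∀ {p : ℕ} (M : Matrix (Fin m) (Fin m) ℝ) (N : Matrix (Fin m) (Fin n) ℝ)
      (g : Fin p → Fin n), (M * N).submatrix id g = M * (N.submatrix id g) := by
    intro p M N g
    ext i j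
    simp [Matrix.mul_apply]
  have hCg0 : ∀ (i0 i : Fin m), C i (g0 i0) = if i = i0 then (1:ℝ) else 0 := by
    intro i0 i
    have h1 : C.submatrix id ⇑g0 = 1 := by
      rw [hC, hsubmul, ← hBbar, Matrix.nonsing_inv_mul _ huR]
    have h2 := congrFun (congrFun h1 i) i0
    rw [Matrix.submatrix_apply] at h2
    rw [id] at h2
    rw [h2, Matrix.one_apply]
  -- the quotient group
  set NN := LinearMap.range B.mulVecLin with hNN
  have hQcard : Nat.card ((Fin m → ℤ) ⧸ NN) = Δ := by
    rw [hNN, natCard_quotient_range_mulVecLin B hBne, hBnatAbs]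
  have hQfin : Finite ((Fin m → ℤ) ⧸ NN) :=
    Nat.finite_of_card_ne_zero (by rw [hQcard]; omega)
  letI : Fintype ((Fin m → ℤ) ⧸ NN) := Fintype.ofFinite _
  set q : Fin n → (Fin m → ℤ) ⧸ NN :=
    fun j => Submodule.Quotient.mk (fun i => A i j) with hq
  -- cast of mulVec
  have hmulVcast : ∀ (z : Fin m → ℤ) (i : Fin m),
      ((B.mulVec z) i : ℝ) = (Bbar.mulVec (fun k => (z k : ℝ))) i := by
    intro z i
    show ((∑ k, B i k * z k : ℤ) : ℝ) = ∑ k, Bbar i k * (z k : ℝ)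
    push_cast
    refine Finset.sum_congr rfl fun k _ => ?_
    rw [hBbarB, Matrix.map_apply]
  have hBbarInj : ∀ x y : Fin m → ℝ, Bbar *ᵥ x = Bbar *ᵥ y → x = y := by
    intro x y hxy
    have h1 := congrArg (fun v => Bbar⁻¹ *ᵥ v) hxy
    simpa [Matrix.mulVec_mulVec, Matrix.nonsing_inv_mul _ huR, Matrix.one_mulVec] using h1
  have hAcolC : ∀ j, Bbar *ᵥ (fun i => C i j) = fun i => Abar i j := by
    intro j
    funext i
    rw [← hBC]
    simp [Matrix.mulVec, Matrix.mul_apply, dotProduct]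
  have hColMem : ∀ j1 j2 : Fin n, q j1 = q j2 ↔
      ∃ z : Fin m → ℤ, ∀ i, C i j1 - C i j2 = (z i : ℝ) := by
    intro j1 j2
    rw [hq]
    rw [Submodule.Quotient.eq]
    constructor
    · rintro ⟨z, hz⟩
      refine ⟨z, fun i => ?_⟩
      have h2 : Bbar *ᵥ ((fun i => C i j1) - fun i => C i j2) =
          Bbar *ᵥ (fun k => (z k : ℝ)) := by
        rw [Matrix.mulVec_sub, hAcolC, hAcolC]
        funext i'
        rw [← hmulVcast z i']
        have h3 := congrFun hz i'
        rw [Matrix.mulVecLin_apply] at h3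
        rw [h3]
        simp [hAbar, Matrix.map_apply]
      have h4 := congrFun (hBbarInj _ _ h2) i
      simpa using h4
    · rintro ⟨z, hz⟩
      refine ⟨z, ?_⟩
      funext i
      rw [Matrix.mulVecLin_apply]
      have h2 : ((B *ᵥ z) i : ℝ) = ((A i j1 - A i j2 : ℤ) : ℝ) := by
        rw [hmulVcast z i]
        have h3 : (fun k => (z k : ℝ)) = (fun k => C k j1) - fun k => C k j2 := by
          funext k
          have := hz k
          simp
          linarith [hz k]
        rw [h3, Matrix.mulVec_sub, hAcolC, hAcolC]
        simp [hAbar, Matrix.map_apply]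
      have h4 : (B *ᵥ z) i = A i j1 - A i j2 := by exact_mod_cast h2
      simpa using h4
  have hq0 : ∀ j : Fin n, q j = 0 ↔ ∃ z : Fin m → ℤ, ∀ i, C i j = (z i : ℝ) := by
    intro j
    rw [hq]
    rw [Submodule.Quotient.mk_eq_zero]
    constructor
    · rintro ⟨z, hz⟩
      refine ⟨z, fun i => ?_⟩
      have h2 : Bbar *ᵥ (fun i => C i j) = Bbar *ᵥ (fun k => (z k : ℝ)) := by
        rw [hAcolC]
        funext i'
        rw [← hmulVcast z i']
        have h3 := congrFun hz i'
        rw [Matrix.mulVecLin_apply] at h3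
        rw [h3]
        simp [hAbar, Matrix.map_apply]
      have h4 := congrFun (hBbarInj _ _ h2) i
      simpa using h4
    · rintro ⟨z, hz⟩
      refine ⟨z, ?_⟩
      funext i
      rw [Matrix.mulVecLin_apply]
      have h2 : ((B *ᵥ z) i : ℝ) = ((A i j : ℤ) : ℝ) := by
        rw [hmulVcast z i]
        have h3 : (fun k => (z k : ℝ)) = fun k => C k j := by
          funext k
          exact (hz k).symm
        rw [h3, hAcolC]
        simp [hAbar, Matrix.map_apply]
      exact_mod_cast h2
  -- fibers
  set S : Finset ((Fin m → ℤ) ⧸ NN) := Finset.univ.image q with hS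
  set fib : ((Fin m → ℤ) ⧸ NN) → Finset (Fin n) :=
    fun c => Finset.univ.filter (fun j => q j = c) with hfib
  have hsum : n = ∑ c ∈ S, (fib c).card := by
    have h1 := Finset.card_eq_sum_card_fiberwise
      (f := q) (s := Finset.univ) (t := S)
      (fun x _ => Finset.mem_image_of_mem q (Finset.mem_univ x))
    rw [Finset.card_fin] at h1
    exact h1
  have hfibemb : ∀ c : (Fin m → ℤ) ⧸ NN, ∃ emb : Fin (fib c).card → Fin n,
      Function.Injective emb ∧ (∀ j, emb j ∈ fib c) ∧ ∀ x ∈ fib c, ∃ j, emb j = x := by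
    intro c
    let e := Fintype.equivFinOfCardEq (Fintype.card_coe (fib c))
    refine ⟨fun j => (e.symm j).1, ?_, fun j => (e.symm j).2, ?_⟩
    · intro a b hab
      exact e.symm.injective (Subtype.ext hab)
    · intro x hx
      exact ⟨e ⟨x, hx⟩, by simp⟩
  have hqmem : ∀ c (j : Fin n), j ∈ fib c ↔ q j = c := by
    intro c j
    rw [hfib]
    simp
  -- fiber of 0
  have hfib0 : (fib 0).card ≤ hGen 1 m := by
    obtain ⟨emb, hembInj, hembMem, hembSurj⟩ := hfibemb 0
    have hz : ∀ j : Fin (fib 0).card, ∃ z : Fin m → ℤ, ∀ i, C i (emb j) = (z i : ℝ) :=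
      fun j => (hq0 (emb j)).mp ((hqmem 0 (emb j)).mp (hembMem j))
    choose zf hzf using hz
    set A0 : Matrix (Fin m) (Fin (fib 0).card) ℤ := Matrix.of fun i j => zf j i with hA0
    apply le_csSup
    · refine ⟨3 ^ m, ?_⟩
      rintro n' ⟨A', hinj', hA'⟩
      rw [Nat.cast_one] at hA'
      exact hGenOne_mem_le m n' A' hinj' hA'
    · refine ⟨A0, ?_, ?_⟩
      · intro j1 j2 h
        apply hembInj
        apply hCtInj
        funext i
        rw [Matrix.transpose_apply, Matrix.transpose_apply, hzf j1 i, hzf j2 i]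
        have h1 := congrFun h i
        rw [Matrix.transpose_apply, Matrix.transpose_apply] at h1
        exact_mod_cast h1
      · rw [Nat.cast_one]
        constructor
        · intro f g
          have hcast : ((A0.submatrix ⇑f ⇑g).map (Int.cast : ℤ → ℝ))
              = C.submatrix ⇑f (emb ∘ ⇑g) := by
            ext i j
            rw [Matrix.map_apply, Matrix.submatrix_apply, Matrix.submatrix_apply, hA0]
            exact (hzf (g j) (f i)).symm
          have h1 := hK f (emb ∘ ⇑g)
          rw [← hcast, cast_abs_det] at h1
          exact_mod_cast h1
        · -- attained
          have hg0mem : ∀ i0 : Fin m, g0 i0 ∈ fib 0 := by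
            intro i0
            rw [hqmem]
            apply (hq0 (g0 i0)).mpr
            refine ⟨fun i => if i = i0 then 1 else 0, fun i => ?_⟩
            rw [hCg0 i0 i]
            by_cases h : i = i0 <;> simp [h]
          have hjm : ∀ i0 : Fin m, ∃ j, emb j = g0 i0 :=
            fun i0 => hembSurj (g0 i0) (hg0mem i0)
          choose jmap hjmap using hjm
          have hjmapInj : Function.Injective jmap := by
            intro a b hab
            apply g0.injective
            rw [← hjmap a, ← hjmap b, hab]
          refine ⟨Function.Embedding.refl _, ⟨jmap, hjmapInj⟩, ?_⟩
          have hcast : (A0.submatrix id jmap).map (Int.cast : ℤ → ℝ) = 1 := by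
            ext i j
            rw [Matrix.map_apply, Matrix.submatrix_apply, hA0, id]
            show ((zf (jmap j) i : ℤ) : ℝ) = _
            rw [← hzf (jmap j) i, hjmap j, hCg0 j i, Matrix.one_apply]
          have hdet1 : (A0.submatrix id jmap).det = 1 := by
            have h1 := cast_det (A0.submatrix id jmap)
            rw [hcast, Matrix.det_one] at h1
            exact_mod_cast h1.symm
          show |(A0.submatrix _ _).det| = 1
          rw [show (A0.submatrix (⇑(Function.Embedding.refl (Fin m)))
            (⇑(⟨jmap, hjmapInj⟩ : Fin m ↪ Fin (fib 0).card))) = A0.submatrix id jmap from rfl]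
          rw [hdet1]
          rfl
  -- nonzero fibers
  have hfibc : ∀ c, c ∈ S → c ≠ 0 →
      (fib c).card ≤ hShiftedRefined Δ m ∧ (fib c).card ≤ hShifted m := by
    intro c hcS hc0
    obtain ⟨emb, hembInj, hembMem, hembSurj⟩ := hfibemb c
    have hpne : 0 < (fib c).card := by
      rw [hS] at hcS
      obtain ⟨x, _, hx2⟩ := Finset.mem_image.mp hcS
      exact Finset.card_pos.mpr ⟨x, (hqmem c x).mpr hx2⟩
    set j0 := emb ⟨0, hpne⟩ with hj0
    set t : Fin m → ℝ := fun i => Int.fract (C i j0) with ht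
    have hdiff : ∀ j : Fin (fib c).card,
        ∃ z : Fin m → ℤ, ∀ i, C i (emb j) - C i j0 = (z i : ℝ) := by
      intro j
      apply (hColMem (emb j) j0).mp
      rw [(hqmem c (emb j)).mp (hembMem j), (hqmem c j0).mp (hembMem ⟨0, hpne⟩)]
    choose zf hzf using hdiff
    set A' : Matrix (Fin m) (Fin (fib c).card) ℝ :=
      Matrix.of fun i j => C i (emb j) - t i with hA'
    have hshift : shiftMat t A' = C.submatrix id emb := by
      ext i j
      show t i + (C i (emb j) - t i) = C i (emb j)
      ring
    have hsign : SignEntries A' := by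
      intro i j
      have hzint : A' i j = ((zf j i + ⌊C i j0⌋ : ℤ) : ℝ) := by
        show C i (emb j) - t i = _
        rw [ht]
        push_cast
        rw [← hzf j i]
        show C i (emb j) - (C i j0 - ⌊C i j0⌋) = C i (emb j) - C i j0 + ⌊C i j0⌋
        ring
      have h1 : |C i (emb j)| ≤ 1 := hent i (emb j)
      have h1' := abs_le.mp h1
      have h2 : 0 ≤ t i := Int.fract_nonneg _
      have h3 : t i < 1 := Int.fract_lt_one _
      have h4 : A' i j = C i (emb j) - t i := rfl
      have h5 : ((zf j i + ⌊C i j0⌋ : ℤ) : ℝ) ≤ 1 := by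
        rw [← hzint, h4]; linarith [h1'.2]
      have h6 : (-2 : ℝ) < ((zf j i + ⌊C i j0⌋ : ℤ) : ℝ) := by
        rw [← hzint, h4]; linarith [h1'.1]
      have h7 : (zf j i + ⌊C i j0⌋ : ℤ) = -1 ∨ (zf j i + ⌊C i j0⌋ : ℤ) = 0 ∨
          (zf j i + ⌊C i j0⌋ : ℤ) = 1 := by
        have h8 : (-2 : ℤ) < zf j i + ⌊C i j0⌋ := by exact_mod_cast h6
        have h9 : (zf j i + ⌊C i j0⌋ : ℤ) ≤ 1 := by exact_mod_cast h5
        omega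
      rcases h7 with h | h | h <;> rw [hzint, h] <;> norm_num
    have ht01 : ∀ i, 0 ≤ t i ∧ t i < 1 :=
      fun i => ⟨Int.fract_nonneg _, Int.fract_lt_one _⟩
    have htne : t ≠ 0 := by
      intro h0
      apply hc0
      rw [← (hqmem c j0).mp (hembMem ⟨0, hpne⟩)]
      apply (hq0 j0).mpr
      refine ⟨fun i => ⌊C i j0⌋, fun i => ?_⟩
      have h1 := congrFun h0 i
      rw [ht] at h1
      have h2 : C i j0 - ⌊C i j0⌋ = 0 := h1
      linarith [h2]
    have hinj' : Function.Injective A'.transpose := by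
      intro j1 j2 h
      apply hembInj
      apply hCtInj
      funext i
      rw [Matrix.transpose_apply, Matrix.transpose_apply]
      have h1 := congrFun h i
      have h2 : C i (emb j1) - t i = C i (emb j2) - t i := h1
      linarith
    have htot : Totally1Submodular (shiftMat t A') := by
      intro k f' g'
      rw [hshift]
      rw [show (C.submatrix id emb).submatrix ⇑f' ⇑g' = C.submatrix ⇑f' (emb ∘ ⇑g') from rfl]
      exact hK f' (emb ∘ ⇑g')
    have hadm : ShiftedAdmissible m (fib c).card t A' := ⟨ht01, htne, hsign, hinj', htot⟩
    have hBdetpm : B.det = (Δ:ℤ) ∨ B.det = -(Δ:ℤ) := abs_eq (by positivity) |>.mp hBabs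
    have hadjC : ∀ i j, (B.det : ℝ) * C i j = (((B.adjugate * A) i j : ℤ) : ℝ) := by
      intro i j
      have h1 : Bbar.adjugate * Abar = Bbar.det • C := by
        rw [← hBC, ← Matrix.mul_assoc, Matrix.adjugate_mul, Matrix.smul_mul, Matrix.one_mul]
      have h2 := congrFun (congrFun h1 i) j
      have h3 : (Bbar.adjugate * Abar) i j = Bbar.det * C i j := by
        rw [h2]
        simp [Matrix.smul_apply]
      have h4 : Bbar.adjugate = (B.adjugate).map (Int.cast : ℤ → ℝ) := by
        rw [hBbarB]
        exact ((Int.castRingHom ℝ).map_adjugate B).symm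
      have h5 : (Bbar.adjugate * Abar) i j = (((B.adjugate * A) i j : ℤ) : ℝ) := by
        rw [h4, hAbar]
        rw [show (B.adjugate).map (Int.cast : ℤ → ℝ) * A.map (Int.cast : ℤ → ℝ)
          = (B.adjugate * A).map (Int.cast : ℤ → ℝ) from (cast_map_mul _ _).symm]
        rfl
      have h6 : (Bbar.det : ℝ) = ((B.det : ℤ) : ℝ) := by
        rw [hBbarB, cast_det]
      rw [← h6, ← h3, h5]
    have href : ∀ i, ∃ z : ℤ, (Δ:ℝ) * t i = (z:ℝ) := by
      intro i
      rcases hBdetpm with hd | hd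
      · refine ⟨(B.adjugate * A) i j0 - Δ * ⌊C i j0⌋, ?_⟩
        have h1 := hadjC i j0
        rw [hd] at h1
        push_cast at h1 ⊢
        rw [ht]
        show (Δ:ℝ) * (C i j0 - ⌊C i j0⌋) = _
        rw [← h1]
        ring
      · refine ⟨-((B.adjugate * A) i j0) - Δ * ⌊C i j0⌋, ?_⟩
        have h1 := hadjC i j0
        rw [hd] at h1
        push_cast at h1 ⊢
        rw [ht]
        show (Δ:ℝ) * (C i j0 - ⌊C i j0⌋) = _
        have h2 : (Δ:ℝ) * C i j0 = -(((B.adjugate * A) i j0 : ℤ) : ℝ) := by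
          push_cast
          linarith [h1]
        push_cast at h2
        rw [mul_sub, h2]
    constructor
    · apply le_csSup
      · refine ⟨3 ^ m, ?_⟩
        rintro n' ⟨t', A'', h', _⟩
        exact hShifted_mem_le m n' t' A'' h'
      · exact ⟨t, A', hadm, href⟩
    · apply le_csSup
      · refine ⟨3 ^ m, ?_⟩
        rintro n' ⟨t', A'', h'⟩
        exact hShifted_mem_le m n' t' A'' h'
      · exact ⟨t, A', hadm⟩
  -- final counting
  have hScard : (S.erase 0).card ≤ Δ - 1 := by
    have h1 : S.erase 0 ⊆ Finset.univ.erase 0 := by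
      intro c hcc
      exact Finset.mem_erase.mpr ⟨(Finset.mem_erase.mp hcc).1, Finset.mem_univ c⟩
    calc (S.erase 0).card ≤ (Finset.univ.erase (0 : (Fin m → ℤ) ⧸ NN)).card :=
          Finset.card_le_card h1
      _ = Fintype.card ((Fin m → ℤ) ⧸ NN) - 1 := by
          rw [Finset.card_erase_of_mem (Finset.mem_univ 0), Finset.card_univ]
      _ = Δ - 1 := by rw [← Nat.card_eq_fintype_card, hQcard]
  have main : ∀ X : ℕ, (∀ c ∈ S.erase 0, (fib c).card ≤ X) →
      n ≤ hGen 1 m + (Δ - 1) * X := by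
    intro X hX
    have h2 : ∑ c ∈ S.erase 0, (fib c).card ≤ (Δ - 1) * X := by
      calc ∑ c ∈ S.erase 0, (fib c).card ≤ (S.erase 0).card • X :=
            Finset.sum_le_card_nsmul _ _ _ hX
        _ = (S.erase 0).card * X := smul_eq_mul _ _
        _ ≤ (Δ - 1) * X := Nat.mul_le_mul_right X hScard
    have h3 : ∑ c ∈ S, (fib c).card ≤ (fib 0).card + ∑ c ∈ S.erase 0, (fib c).card := by
      by_cases h0 : (0 : (Fin m → ℤ) ⧸ NN) ∈ S
      · rw [← Finset.add_sum_erase S _ h0]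
      · rw [Finset.erase_eq_of_notMem h0]
        exact Nat.le_add_left _ _
    calc n = ∑ c ∈ S, (fib c).card := hsum
      _ ≤ (fib 0).card + ∑ c ∈ S.erase 0, (fib c).card := h3
      _ ≤ hGen 1 m + (Δ - 1) * X := Nat.add_le_add hfib0 h2
  constructor
  · exact main _ fun c hc =>
      (hfibc c (Finset.mem_of_mem_erase hc) (Finset.mem_erase.mp hc).1).1
  · exact main _ fun c hc =>
      (hfibc c (Finset.mem_of_mem_erase hc) (Finset.mem_erase.mp hc).1).2
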